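/- Let A be a simple finite-dimensional algebra over a field F of characteristic zero with a comultiplication Δ such that the Drinfeld double D(A) is a direct sum A₁ ⊕ A₂ of two proper simple ideals, let φ₁, φ₂ : A* → A be the linear maps with f − φᵢ(f) ∈ Aᵢ for all f ∈ A*, and let ψ : A → A* be the linear bijection with a = −φ₁(ψ(a)) + φ₂(ψ(a)) for all a ∈ A. Then the operator Q : A → A defined by Q(a) = φ₂(ψ(a)) is a Rota–Baxter operator of weight −1 on A. -/
import Mathlib


open TensorProduct

/-- `I` is a (two-sided) ideal for the product `prod`. -/
def IsIdealP {F M : Type*} [Field F] [AddCommGroup M] [Module F M]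
    (prod : M → M → M) (I : Submodule F M) : Prop :=
  ∀ x ∈ I, ∀ y : M, prod x y ∈ I ∧ prod y x ∈ I

/-- The ideal `I` is simple as an algebra with the restricted product. -/
def IsSimpleIdealP {F M : Type*} [Field F] [AddCommGroup M] [Module F M]
    (prod : M → M → M) (I : Submodule F M) : Prop :=
  (∃ x ∈ I, ∃ y ∈ I, prod x y ≠ 0) ∧
    ∀ J : Submodule F M, J ≤ I →
      (∀ x ∈ J, ∀ y ∈ I, prod x y ∈ J ∧ prod y x ∈ J) → J = ⊥ ∨ J = I

/-- The multiplication of the Drinfeld double `D(A) = A ⊕ A*` associated with the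
bilinear product `mul` and the comultiplication `Δ`:
`(a + f)(b + g) = (ab + f⇀b + a↼g) + (fg + f⇽b + a⇁g)`. -/
noncomputable def dmul {F A : Type*} [Field F] [AddCommGroup A] [Module F A]
    (mul : A →ₗ[F] A →ₗ[F] A) (Δ : A →ₗ[F] A ⊗[F] A)
    (p q : A × Module.Dual F A) : A × Module.Dual F A :=
  (mul p.1 q.1
      + TensorProduct.rid F A (LinearMap.lTensor A p.2 (Δ q.1))
      + TensorProduct.lid F A (LinearMap.rTensor A q.2 (Δ p.1)),
    Δ.dualMap (TensorProduct.dualDistrib F A A (p.2 ⊗ₜ[F] q.2))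
      + p.2.comp (mul q.1)
      + q.2.comp (mul.flip p.1))

/-- `R` is a Rota–Baxter operator of weight `lam` for the bilinear product `mul`. -/
def IsRotaBaxter {F L : Type*} [Field F] [AddCommGroup L] [Module F L]
    (mul : L →ₗ[F] L →ₗ[F] L) (R : L → L) (lam : F) : Prop :=
  ∀ x y : L, mul (R x) (R y) = R (mul (R x) y + mul x (R y) + lam • mul x y)


section RBaux
variable {F A : Type*} [Field F] [AddCommGroup A] [Module F A]
    (mul : A →ₗ[F] A →ₗ[F] A) (Δ : A →ₗ[F] A ⊗[F] A)

lemma dmul_add_left' (p p' q : A × Module.Dual F A) :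
    dmul mul Δ (p + p') q = dmul mul Δ p q + dmul mul Δ p' q := by
  unfold dmul
  refine Prod.ext ?_ ?_ <;>
  · simp only [Prod.fst_add, Prod.snd_add, map_add, LinearMap.add_apply,
      LinearMap.lTensor_add, LinearMap.rTensor_add, TensorProduct.add_tmul,
      TensorProduct.tmul_add, LinearMap.add_comp, LinearMap.comp_add]
    abel

lemma dmul_add_right' (p q q' : A × Module.Dual F A) :
    dmul mul Δ p (q + q') = dmul mul Δ p q + dmul mul Δ p q' := by
  unfold dmul
  refine Prod.ext ?_ ?_ <;>
  · simp only [Prod.fst_add, Prod.snd_add, map_add, LinearMap.add_apply,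
      LinearMap.lTensor_add, LinearMap.rTensor_add, TensorProduct.add_tmul,
      TensorProduct.tmul_add, LinearMap.add_comp, LinearMap.comp_add]
    abel

lemma dmul_pure' (a b : A) :
    dmul mul Δ (a, (0 : Module.Dual F A)) (b, 0) = (mul a b, 0) := by
  unfold dmul
  simp
end RBaux

theorem stmt8 {F A : Type*} [Field F] [CharZero F] [AddCommGroup A] [Module F A]
    [FiniteDimensional F A] (mul : A →ₗ[F] A →ₗ[F] A)
    -- `A` is simple
    (hsimple : (∃ x y : A, mul x y ≠ 0) ∧
      ∀ I : Submodule F A, (∀ x ∈ I, ∀ y : A, mul x y ∈ I ∧ mul y x ∈ I) → I = ⊥ ∨ I = ⊤)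
    -- a comultiplication on `A`
    (Δ : A →ₗ[F] A ⊗[F] A)
    -- `D(A) = A₁ ⊕ A₂`, a direct sum of two proper simple ideals
    (A₁ A₂ : Submodule F (A × Module.Dual F A))
    (h1b : A₁ ≠ ⊥) (h1t : A₁ ≠ ⊤) (h2b : A₂ ≠ ⊥) (h2t : A₂ ≠ ⊤)
    (hcompl : IsCompl A₁ A₂)
    (hid1 : IsIdealP (dmul mul Δ) A₁) (hid2 : IsIdealP (dmul mul Δ) A₂)
    (hs1 : IsSimpleIdealP (dmul mul Δ) A₁) (hs2 : IsSimpleIdealP (dmul mul Δ) A₂)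
    -- the linear maps `φᵢ` with `f - φᵢ(f) ∈ Aᵢ` for all `f ∈ A*`
    (φ₁ φ₂ : Module.Dual F A →ₗ[F] A)
    (hφ1 : ∀ f : Module.Dual F A, ((-φ₁ f, f) : A × Module.Dual F A) ∈ A₁)
    (hφ2 : ∀ f : Module.Dual F A, ((-φ₂ f, f) : A × Module.Dual F A) ∈ A₂)
    -- the linear bijection `ψ` with `a = -φ₁(ψ a) + φ₂(ψ a)` for all `a ∈ A`
    (ψ : A →ₗ[F] Module.Dual F A) (hψbij : Function.Bijective ψ)
    (hψ : ∀ c : A, c = -φ₁ (ψ c) + φ₂ (ψ c))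
    :
    IsRotaBaxter mul (fun c => φ₂ (ψ c)) (-1 : F) := by
  have he1 : ∀ z : A, ((z - φ₂ (ψ z), ψ z) : A × Module.Dual F A) ∈ A₁ := by
    intro z
    have hneg : -φ₁ (ψ z) = z - φ₂ (ψ z) := eq_sub_of_add_eq (hψ z).symm
    have h := hφ1 (ψ z)
    rwa [hneg] at h
  have he2 : ∀ z : A, ((φ₂ (ψ z), -ψ z) : A × Module.Dual F A) ∈ A₂ := by
    intro z
    have h := hφ2 (-ψ z)
    rwa [map_neg, neg_neg] at h
  have hzero : ∀ p ∈ A₁, ∀ q ∈ A₂, dmul mul Δ p q = 0 ∧ dmul mul Δ q p = 0 := by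
    intro p hp q hq
    have hle : A₁ ⊓ A₂ ≤ ⊥ := hcompl.disjoint.le_bot
    constructor
    · exact (Submodule.mem_bot F).mp (hle (Submodule.mem_inf.mpr ⟨(hid1 p hp q).1, (hid2 q hq p).2⟩))
    · exact (Submodule.mem_bot F).mp (hle (Submodule.mem_inf.mpr ⟨(hid1 p hp q).2, (hid2 q hq p).1⟩))
  have hsplit : ∀ z : A, ((z, 0) : A × Module.Dual F A)
      = (z - φ₂ (ψ z), ψ z) + (φ₂ (ψ z), -ψ z) := by
    intro z
    refine Prod.ext ?_ ?_ <;> simp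
  have key : ∀ a b : A, ((φ₂ (ψ (mul a b)), -ψ (mul a b)) : A × Module.Dual F A)
      = dmul mul Δ (φ₂ (ψ a), -ψ a) (φ₂ (ψ b), -ψ b) := by
    intro a b
    have heq : ((mul a b - φ₂ (ψ (mul a b)), ψ (mul a b)) : A × Module.Dual F A)
          + (φ₂ (ψ (mul a b)), -ψ (mul a b))
        = dmul mul Δ (a - φ₂ (ψ a), ψ a) (b - φ₂ (ψ b), ψ b)
          + dmul mul Δ (φ₂ (ψ a), -ψ a) (φ₂ (ψ b), -ψ b) := by
      rw [← hsplit (mul a b), ← dmul_pure' mul Δ a b, hsplit a, hsplit b,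
        dmul_add_left', dmul_add_right', dmul_add_right',
        (hzero _ (he1 a) _ (he2 b)).1, (hzero _ (he1 b) _ (he2 a)).2]
      abel
    have hdiff : ((φ₂ (ψ (mul a b)), -ψ (mul a b)) : A × Module.Dual F A)
          - dmul mul Δ (φ₂ (ψ a), -ψ a) (φ₂ (ψ b), -ψ b)
        = dmul mul Δ (a - φ₂ (ψ a), ψ a) (b - φ₂ (ψ b), ψ b)
          - (mul a b - φ₂ (ψ (mul a b)), ψ (mul a b)) := by
      rw [sub_eq_sub_iff_add_eq_add, add_comm]
      exact heq
    have hm2 : ((φ₂ (ψ (mul a b)), -ψ (mul a b)) : A × Module.Dual F A)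
        - dmul mul Δ (φ₂ (ψ a), -ψ a) (φ₂ (ψ b), -ψ b) ∈ A₂ :=
      Submodule.sub_mem _ (he2 _) (hid2 _ (he2 a) _).1
    have hm1 : ((φ₂ (ψ (mul a b)), -ψ (mul a b)) : A × Module.Dual F A)
        - dmul mul Δ (φ₂ (ψ a), -ψ a) (φ₂ (ψ b), -ψ b) ∈ A₁ := by
      rw [hdiff]
      exact Submodule.sub_mem _ (hid1 _ (he1 a) _).1 (he1 _)
    have := (Submodule.mem_bot F).mp
      (hcompl.disjoint.le_bot (Submodule.mem_inf.mpr ⟨hm1, hm2⟩))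
    exact sub_eq_zero.mp this
  have key1 : ∀ a b : A, ((φ₂ (ψ (mul a b)), -ψ (mul a b)) : A × Module.Dual F A)
      = dmul mul Δ (φ₂ (ψ a), -ψ a) (b, 0) := by
    intro a b
    rw [hsplit b, dmul_add_right', (hzero _ (he1 b) _ (he2 a)).2, zero_add, key]
  have key2 : ∀ a b : A, ((φ₂ (ψ (mul a b)), -ψ (mul a b)) : A × Module.Dual F A)
      = dmul mul Δ (a, 0) (φ₂ (ψ b), -ψ b) := by
    intro a b
    rw [hsplit a, dmul_add_left', (hzero _ (he1 a) _ (he2 b)).1, zero_add, key]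
  have h1 : ∀ a b : A, φ₂ (ψ (mul a b)) = mul (φ₂ (ψ a)) b
      + TensorProduct.rid F A (LinearMap.lTensor A (-ψ a) (Δ b)) := by
    intro a b
    have h := congrArg Prod.fst (key1 a b)
    simpa [dmul] using h
  have h2 : ∀ a b : A, φ₂ (ψ (mul a b)) = mul a (φ₂ (ψ b))
      + TensorProduct.lid F A (LinearMap.rTensor A (-ψ b) (Δ a)) := by
    intro a b
    have h := congrArg Prod.fst (key2 a b)
    simpa [dmul] using h
  have h3 : ∀ a b : A, φ₂ (ψ (mul a b)) = mul (φ₂ (ψ a)) (φ₂ (ψ b))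
      + TensorProduct.rid F A (LinearMap.lTensor A (-ψ a) (Δ (φ₂ (ψ b))))
      + TensorProduct.lid F A (LinearMap.rTensor A (-ψ b) (Δ (φ₂ (ψ a)))) := by
    intro a b
    have h := congrArg Prod.fst (key a b)
    simpa [dmul] using h
  intro x y
  simp only [map_add, map_smul, neg_one_smul, map_neg]
  rw [h3 x y, h1 x (φ₂ (ψ y)), h2 (φ₂ (ψ x)) y]
  abel
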